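/- Let D be a division ring, Γ₀ a linearly ordered commutative group with zero, and v : D → Γ₀ a valuation (i.e. v(xy) = v(x)v(y), v(x+y) ≤ max(v(x), v(y)), v(1) = 1, v(0) = 0). If x ∈ D satisfies v(x − 1) < 1, x ≠ 1, and x^k = 1 for some positive integer k, then v(k·1_D) < 1 (that is, the image of k in D lies in the maximal ideal of the valuation ring). -/
import Mathlib

lemma val_natCast_le_one {D : Type*} [DivisionRing D] {Γ₀ : Type*}
    [LinearOrderedCommGroupWithZero Γ₀] (v : Valuation D Γ₀) (n : ℕ) :
    v (n : D) ≤ 1 := by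
  induction n with
  | zero => simp
  | succ n ih =>
      push_cast
      calc v ((n : D) + 1) ≤ max (v (n : D)) (v 1) := v.map_add _ _
        _ ≤ 1 := by simp [ih]

/-- If `x` lies in `1 + M` (i.e. `v (x - 1) < 1`), `x ≠ 1`, and `x ^ k = 1` for a
positive integer `k`, then the image of `k` in `D` lies in the maximal ideal of the
valuation ring, i.e. `v (k : D) < 1`. -/
theorem congruence_step1 {D : Type*} [DivisionRing D] {Γ₀ : Type*}
    [LinearOrderedCommGroupWithZero Γ₀] (v : Valuation D Γ₀)
    (x : D) (hx : v (x - 1) < 1) (hx1 : x ≠ 1)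
    (k : ℕ) (hk : 0 < k) (hxk : x ^ k = 1) :
    v (k : D) < 1 := by
  set y : D := x - 1 with hy_def
  have hy : y ≠ 0 := sub_ne_zero.mpr hx1
  obtain ⟨m, rfl⟩ : ∃ m, k = m + 1 := ⟨k - 1, (Nat.succ_pred_eq_of_pos hk).symm⟩
  -- binomial expansion of (y+1)^k = 1
  have hpow : (y + 1) ^ (m + 1) = 1 := by
    rw [hy_def]; simpa using hxk
  have hbin : (y + 1) ^ (m + 1) =
      ∑ i ∈ Finset.range (m + 2), y ^ i * 1 ^ (m + 1 - i) * ((m + 1).choose i : D) :=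
    Commute.add_pow (Commute.one_right y) (m + 1)
  have h0 : ∑ i ∈ Finset.range (m + 1), y ^ (i + 1) * ((m + 1).choose (i + 1) : D) = 0 := by
    have := hbin.symm.trans hpow
    rw [Finset.sum_range_succ'] at this
    simp only [one_pow, mul_one, pow_zero, Nat.choose_zero_right, Nat.cast_one, one_mul] at this
    exact add_eq_right.mp this
  have hT : ∑ i ∈ Finset.range (m + 1), y ^ i * ((m + 1).choose (i + 1) : D) = 0 := by
    have hfac : y * ∑ i ∈ Finset.range (m + 1), y ^ i * ((m + 1).choose (i + 1) : D)
        = ∑ i ∈ Finset.range (m + 1), y ^ (i + 1) * ((m + 1).choose (i + 1) : D) := by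
      rw [Finset.mul_sum]
      refine Finset.sum_congr rfl fun i _ => ?_
      rw [← mul_assoc, ← pow_succ']
    have := hfac.trans h0
    rcases mul_eq_zero.mp this with h | h
    · exact absurd h hy
    · exact h
  -- peel off the i = 0 term: k + ∑_{i≥1} ... = 0
  rw [Finset.sum_range_succ'] at hT
  simp only [pow_zero, one_mul, zero_add, Nat.choose_one_right] at hT
  have hk' : ((m + 1 : ℕ) : D) = -∑ i ∈ Finset.range m, y ^ (i + 1) * ((m + 1).choose (i + 1 + 1) : D) := by
    exact eq_neg_of_add_eq_zero_right hT
  rw [hk', v.map_neg]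
  refine Valuation.map_sum_lt v one_ne_zero fun i _ => ?_
  rw [v.map_mul, v.map_pow]
  calc v y ^ (i + 1) * v (((m + 1).choose (i + 1 + 1) : D))
      ≤ v y ^ (i + 1) := mul_le_of_le_one_right' (val_natCast_le_one v _)
    _ = v y * v y ^ i := by rw [pow_succ']
    _ ≤ v y * 1 := mul_le_mul_right (pow_le_one' hx.le i) _
    _ < 1 := by simpa using hx
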